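/- arXiv:2203.05104 — 2 statements merged into one kernel-verified Lean document; each statement's English description precedes it below -/
import Mathlib

section
/- Let f(θ) = (1/s(m)) Σ_{i=1}^m v_i g_i(w_i) with disjoint parameter blocks, each g_i β-smooth, and v_1,...,v_m i.i.d. standard Gaussian. Then with probability at least 1 - 2·exp(-(1/2)log²m + log m), for every θ with ‖θ-θ_0‖ ≤ R, the quadratic term satisfies |(1/2)(θ-θ_0)^T H(ξ)(θ-θ_0)| ≤ β·R²·log(m)/(2·s(m)). -/
open MeasureTheory ProbabilityTheory RealInnerProductSpace

section Aux

lemma gauss_pdf_le_Ioi {t : ℝ} (ht : 0 ≤ t) {x : ℝ} (hx : t ≤ x) :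
    gaussianPDFReal 0 1 x ≤ Real.exp (-t ^ 2 / 2) * gaussianPDFReal t 1 x := by
  unfold gaussianPDFReal
  calc (Real.sqrt (2 * Real.pi * ((1 : NNReal) : ℝ)))⁻¹ *
        Real.exp (-(x - 0) ^ 2 / (2 * ((1 : NNReal) : ℝ)))
      ≤ (Real.sqrt (2 * Real.pi * ((1 : NNReal) : ℝ)))⁻¹ *
        (Real.exp (-t ^ 2 / 2) * Real.exp (-(x - t) ^ 2 / (2 * ((1 : NNReal) : ℝ)))) := by
        refine mul_le_mul_of_nonneg_left ?_ (by positivity)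
        rw [← Real.exp_add, Real.exp_le_exp]
        push_cast
        nlinarith
    _ = Real.exp (-t ^ 2 / 2) * ((Real.sqrt (2 * Real.pi * ((1 : NNReal) : ℝ)))⁻¹ *
        Real.exp (-(x - t) ^ 2 / (2 * ((1 : NNReal) : ℝ)))) := by ring

lemma gauss_pdf_le_Iio {t : ℝ} (ht : 0 ≤ t) {x : ℝ} (hx : x ≤ -t) :
    gaussianPDFReal 0 1 x ≤ Real.exp (-t ^ 2 / 2) * gaussianPDFReal (-t) 1 x := by
  unfold gaussianPDFReal
  calc (Real.sqrt (2 * Real.pi * ((1 : NNReal) : ℝ)))⁻¹ *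
        Real.exp (-(x - 0) ^ 2 / (2 * ((1 : NNReal) : ℝ)))
      ≤ (Real.sqrt (2 * Real.pi * ((1 : NNReal) : ℝ)))⁻¹ *
        (Real.exp (-t ^ 2 / 2) * Real.exp (-(x - -t) ^ 2 / (2 * ((1 : NNReal) : ℝ)))) := by
        refine mul_le_mul_of_nonneg_left ?_ (by positivity)
        rw [← Real.exp_add, Real.exp_le_exp]
        push_cast
        nlinarith
    _ = Real.exp (-t ^ 2 / 2) * ((Real.sqrt (2 * Real.pi * ((1 : NNReal) : ℝ)))⁻¹ *
        Real.exp (-(x - -t) ^ 2 / (2 * ((1 : NNReal) : ℝ)))) := by ring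

lemma gauss_side {t c : ℝ} {S : Set ℝ} (hm : MeasurableSet S)
    (hS : ∀ x ∈ S, gaussianPDFReal 0 1 x ≤ Real.exp (-t ^ 2 / 2) * gaussianPDFReal c 1 x) :
    gaussianReal 0 1 S ≤ ENNReal.ofReal (Real.exp (-t ^ 2 / 2)) := by
  rw [gaussianReal_apply_eq_integral 0 one_ne_zero S]
  apply ENNReal.ofReal_le_ofReal
  calc ∫ x in S, gaussianPDFReal 0 1 x
      ≤ ∫ x in S, Real.exp (-t ^ 2 / 2) * gaussianPDFReal c 1 x := by
        refine setIntegral_mono_on (integrable_gaussianPDFReal 0 1).restrict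
          (((integrable_gaussianPDFReal c 1).const_mul _).restrict) hm hS
    _ = Real.exp (-t ^ 2 / 2) * ∫ x in S, gaussianPDFReal c 1 x := integral_const_mul _ _
    _ ≤ Real.exp (-t ^ 2 / 2) * 1 := by
        refine mul_le_mul_of_nonneg_left ?_ (Real.exp_nonneg _)
        calc ∫ x in S, gaussianPDFReal c 1 x ≤ ∫ x, gaussianPDFReal c 1 x :=
              setIntegral_le_integral (integrable_gaussianPDFReal c 1)
                (ae_of_all _ (gaussianPDFReal_nonneg c 1))
          _ = 1 := integral_gaussianPDFReal_eq_one c one_ne_zero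
    _ = Real.exp (-t ^ 2 / 2) := mul_one _

/-- Standard gaussian tail bound. -/
lemma gauss_tail {t : ℝ} (ht : 0 ≤ t) :
    gaussianReal 0 1 {x : ℝ | t < |x|} ≤ ENNReal.ofReal (2 * Real.exp (-t ^ 2 / 2)) := by
  have hsub : {x : ℝ | t < |x|} ⊆ Set.Ioi t ∪ Set.Iio (-t) := by
    intro x hx
    simp only [Set.mem_setOf_eq] at hx
    rcases lt_abs.mp hx with h | h
    · exact Or.inl h
    · exact Or.inr (Set.mem_Iio.mpr (by linarith))
  calc gaussianReal 0 1 {x : ℝ | t < |x|} ≤ gaussianReal 0 1 (Set.Ioi t ∪ Set.Iio (-t)) :=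
        measure_mono hsub
    _ ≤ gaussianReal 0 1 (Set.Ioi t) + gaussianReal 0 1 (Set.Iio (-t)) := measure_union_le _ _
    _ ≤ ENNReal.ofReal (Real.exp (-t ^ 2 / 2)) + ENNReal.ofReal (Real.exp (-t ^ 2 / 2)) := by
        refine add_le_add ?_ ?_
        · exact gauss_side measurableSet_Ioi fun x hx => gauss_pdf_le_Ioi ht (le_of_lt hx)
        · exact gauss_side measurableSet_Iio fun x hx => gauss_pdf_le_Iio ht (le_of_lt hx)
    _ = ENNReal.ofReal (2 * Real.exp (-t ^ 2 / 2)) := by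
        rw [← ENNReal.ofReal_add (Real.exp_nonneg _) (Real.exp_nonneg _)]; ring_nf

/-- Marginal of a product of probability measures. -/
lemma pi_eval {m : ℕ} (μ : Measure ℝ) [IsProbabilityMeasure μ] (i : Fin m) (A : Set ℝ)
    (hA : MeasurableSet A) :
    Measure.pi (fun _ : Fin m => μ) (Function.eval i ⁻¹' A) = μ A := by
  rw [Set.eval_preimage, Measure.pi_pi]
  rw [Finset.prod_eq_single i]
  · simp
  · intro j _ hj
    simp [Function.update_of_ne hj]
  · simp

end Aux

section Det

variable {m : ℕ} {p : Fin m → ℕ}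

/-- Pointwise bound on the bilinear second derivative of a `β`-smooth function. -/
lemma second_deriv_bound {β : ℝ} (hβ : 0 ≤ β) {n : ℕ} {g : EuclideanSpace ℝ (Fin n) → ℝ}
    (hg : ContDiff ℝ 2 g)
    (hsmooth : ∀ w w', ‖fderiv ℝ g w - fderiv ℝ g w'‖ ≤ β * ‖w - w'‖)
    (w a b : EuclideanSpace ℝ (Fin n)) :
    |iteratedFDeriv ℝ 2 g w ![a, b]| ≤ β * ‖a‖ * ‖b‖ := by
  rw [iteratedFDeriv_two_apply]
  have hd : ContDiff ℝ 1 (fderiv ℝ g) := hg.fderiv_right (by norm_num)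
  have hF : HasFDerivAt (fderiv ℝ g) (fderiv ℝ (fderiv ℝ g) w) w :=
    ((hd.differentiable one_ne_zero) w).hasFDerivAt
  have hnorm : ‖fderiv ℝ (fderiv ℝ g) w‖ ≤ β :=
    hF.le_of_lip' hβ (Filter.Eventually.of_forall fun x => hsmooth x w)
  have h0 : (![a, b] 0) = a := rfl
  have h1 : (![a, b] 1) = b := rfl
  rw [h0, h1]
  calc |fderiv ℝ (fderiv ℝ g) w a b|
      ≤ ‖fderiv ℝ (fderiv ℝ g) w a‖ * ‖b‖ := (fderiv ℝ (fderiv ℝ g) w a).le_opNorm _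
    _ ≤ (‖fderiv ℝ (fderiv ℝ g) w‖ * ‖a‖) * ‖b‖ :=
        mul_le_mul_of_nonneg_right ((fderiv ℝ (fderiv ℝ g) w).le_opNorm _) (norm_nonneg _)
    _ ≤ (β * ‖a‖) * ‖b‖ := mul_le_mul_of_nonneg_right
        (mul_le_mul_of_nonneg_right hnorm (norm_nonneg _)) (norm_nonneg _)

set_option maxHeartbeats 1000000 in
/-- The second derivative of the assembly decomposes blockwise. -/
lemma assembly_second_deriv {m : ℕ} {p : Fin m → ℕ} {s : ℝ} (g : ∀ i : Fin m, EuclideanSpace ℝ (Fin (p i)) → ℝ)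
    (hg : ∀ i, ContDiff ℝ 2 (g i)) (v : Fin m → ℝ)
    (ξ h : PiLp 2 (fun i => EuclideanSpace ℝ (Fin (p i)))) :
    iteratedFDeriv ℝ 2 (fun θ => (1 / s) * ∑ i, v i * g i (θ i)) ξ ![h, h] =
      (1 / s) * ∑ i, v i * iteratedFDeriv ℝ 2 (g i) (ξ i) ![h i, h i] := by
  have hGc : ∀ i, ContDiff ℝ 2 (fun θ : PiLp 2 (fun i => EuclideanSpace ℝ (Fin (p i))) =>
      g i (θ i)) := fun i =>
    (hg i).comp (PiLp.proj (𝕜 := ℝ) 2 (fun i => EuclideanSpace ℝ (Fin (p i))) i).contDiff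
  have hfc : ∀ i, ContDiff ℝ 2 (fun θ : PiLp 2 (fun i => EuclideanSpace ℝ (Fin (p i))) =>
      v i * g i (θ i)) := fun i => contDiff_const.mul (hGc i)
  have hsum : ContDiff ℝ 2 (fun θ : PiLp 2 (fun i => EuclideanSpace ℝ (Fin (p i))) =>
      ∑ i, v i * g i (θ i)) := ContDiff.sum fun i _ => hfc i
  have h1 : iteratedFDeriv ℝ 2
      (fun θ : PiLp 2 (fun i => EuclideanSpace ℝ (Fin (p i))) =>
        (1 / s) • ∑ i, v i * g i (θ i)) ξ =
      (1 / s) • iteratedFDeriv ℝ 2 (fun θ => ∑ i, v i * g i (θ i)) ξ :=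
    iteratedFDeriv_const_smul_apply' (a := (1 / s : ℝ))
      (f := fun θ : PiLp 2 (fun i => EuclideanSpace ℝ (Fin (p i))) =>
        ∑ i, v i * g i (θ i)) hsum.contDiffAt
  have h2 : iteratedFDeriv ℝ 2
      (fun θ : PiLp 2 (fun i => EuclideanSpace ℝ (Fin (p i))) => ∑ i, v i * g i (θ i)) ξ =
      ∑ i, iteratedFDeriv ℝ 2 (fun θ => v i * g i (θ i)) ξ :=
    (congrFun (iteratedFDeriv_sum
      (f := fun j (θ : PiLp 2 (fun i => EuclideanSpace ℝ (Fin (p i)))) => v j * g j (θ j))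
      fun j _ => hfc j) ξ).trans (Finset.sum_apply _ _ _)
  have h3 : ∀ i, iteratedFDeriv ℝ 2
      (fun θ : PiLp 2 (fun i => EuclideanSpace ℝ (Fin (p i))) => v i • g i (θ i)) ξ =
      v i • iteratedFDeriv ℝ 2 (fun θ => g i (θ i)) ξ :=
    fun i => iteratedFDeriv_const_smul_apply' (a := v i)
      (f := fun θ : PiLp 2 (fun i => EuclideanSpace ℝ (Fin (p i))) => g i (θ i)) (hGc i).contDiffAt
  have h4 : ∀ i, iteratedFDeriv ℝ 2
      (fun θ : PiLp 2 (fun i => EuclideanSpace ℝ (Fin (p i))) => g i (θ i)) ξ =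
      (iteratedFDeriv ℝ 2 (g i) (ξ i)).compContinuousLinearMap
        (fun _ => PiLp.proj (𝕜 := ℝ) 2 (fun i => EuclideanSpace ℝ (Fin (p i))) i) :=
    fun i => (PiLp.proj (𝕜 := ℝ) 2 (fun i => EuclideanSpace ℝ (Fin (p i))) i
      ).iteratedFDeriv_comp_right (hg i) ξ le_rfl
  have e0 : iteratedFDeriv ℝ 2
      (fun θ : PiLp 2 (fun i => EuclideanSpace ℝ (Fin (p i))) =>
        (1 / s) * ∑ i, v i * g i (θ i)) ξ =
      iteratedFDeriv ℝ 2 (fun θ => (1 / s) • ∑ i, v i * g i (θ i)) ξ := rfl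
  rw [e0, h1, ContinuousMultilinearMap.smul_apply, h2, ContinuousMultilinearMap.sum_apply,
    smul_eq_mul]
  congr 1
  refine Finset.sum_congr rfl fun i _ => ?_
  have e1 : iteratedFDeriv ℝ 2
      (fun θ : PiLp 2 (fun i => EuclideanSpace ℝ (Fin (p i))) => v i * g i (θ i)) ξ =
      iteratedFDeriv ℝ 2 (fun θ => v i • g i (θ i)) ξ := rfl
  rw [e1, h3 i, ContinuousMultilinearMap.smul_apply, smul_eq_mul, h4 i,
    ContinuousMultilinearMap.compContinuousLinearMap_apply]
  refine congrArg (fun z => v i * z) ?_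
  exact congrArg (⇑(iteratedFDeriv ℝ 2 (g i) (ξ i))) (funext fun j => by fin_cases j <;> rfl)

end Det

/-- Assembly model with disjoint parameter blocks and i.i.d. standard Gaussian weights:
with probability at least `1 - 2 exp(-(1/2) log² m + log m)` over the weights, the quadratic
Taylor remainder is bounded by `β R² log m / (2 s m)` on every `R`-ball. -/
theorem stmt3 (m : ℕ) (p : Fin m → ℕ) (s β R : ℝ) (hs : 0 < s) (hβ : 0 ≤ β) (hR : 0 ≤ R)
    (g : ∀ i : Fin m, EuclideanSpace ℝ (Fin (p i)) → ℝ)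
    (hg : ∀ i, ContDiff ℝ 2 (g i))
    (hsmooth : ∀ i w w', ‖fderiv ℝ (g i) w - fderiv ℝ (g i) w'‖ ≤ β * ‖w - w'‖)
    (F : (Fin m → ℝ) → PiLp 2 (fun i => EuclideanSpace ℝ (Fin (p i))) → ℝ)
    (hF : ∀ v θ, F v θ = (1 / s) * ∑ i, v i * g i (θ i)) :
    ENNReal.ofReal (1 - 2 * Real.exp (-(1 / 2) * Real.log m ^ 2 + Real.log m)) ≤
      Measure.pi (fun _ : Fin m => gaussianReal 0 1)
        {v | ∀ θ θ₀ ξ : PiLp 2 (fun i => EuclideanSpace ℝ (Fin (p i))), ‖θ - θ₀‖ ≤ R →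
          |(1 / 2 : ℝ) * iteratedFDeriv ℝ 2 (F v) ξ ![θ - θ₀, θ - θ₀]| ≤
            β * R ^ 2 * Real.log m / (2 * s)} := by
  rcases Nat.eq_zero_or_pos m with hm | hm
  · subst hm
    have h0 : (1 : ℝ) - 2 * Real.exp (-(1 / 2) * Real.log ((0 : ℕ) : ℝ) ^ 2 +
        Real.log ((0 : ℕ) : ℝ)) ≤ 0 := by
      norm_num [Real.log_zero, Real.exp_zero]
    exact le_trans (le_of_eq (ENNReal.ofReal_eq_zero.mpr h0)) zero_le
  set L : ℝ := Real.log m with hLdef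
  have hL : 0 ≤ L := Real.log_natCast_nonneg m
  set E : Set (Fin m → ℝ) := {v | ∀ i, |v i| ≤ L} with hE
  have hsubset : E ⊆ {v | ∀ θ θ₀ ξ : PiLp 2 (fun i => EuclideanSpace ℝ (Fin (p i))),
      ‖θ - θ₀‖ ≤ R →
      |(1 / 2 : ℝ) * iteratedFDeriv ℝ 2 (F v) ξ ![θ - θ₀, θ - θ₀]| ≤
        β * R ^ 2 * Real.log m / (2 * s)} := by
    intro v hv θ θ₀ ξ hθ
    have hFv : F v = fun θ => (1 / s) * ∑ i, v i * g i (θ i) := funext fun θ => hF v θ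
    rw [hFv, assembly_second_deriv g hg v ξ (θ - θ₀)]
    set h := θ - θ₀ with hh
    have hterm : ∀ i, |v i * iteratedFDeriv ℝ 2 (g i) (ξ i) ![h i, h i]| ≤
        L * (β * ‖h i‖ ^ 2) := by
      intro i
      rw [abs_mul]
      have h1 := second_deriv_bound hβ (hg i) (hsmooth i) (ξ i) (h i) (h i)
      calc |v i| * |iteratedFDeriv ℝ 2 (g i) (ξ i) ![h i, h i]|
          ≤ L * (β * ‖h i‖ * ‖h i‖) := mul_le_mul (hv i) h1 (abs_nonneg _) hL
        _ = L * (β * ‖h i‖ ^ 2) := by ring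
    have hsum : |∑ i, v i * iteratedFDeriv ℝ 2 (g i) (ξ i) ![h i, h i]| ≤
        L * (β * ‖h‖ ^ 2) := by
      calc |∑ i, v i * iteratedFDeriv ℝ 2 (g i) (ξ i) ![h i, h i]|
          ≤ ∑ i, |v i * iteratedFDeriv ℝ 2 (g i) (ξ i) ![h i, h i]| :=
            Finset.abs_sum_le_sum_abs _ _
        _ ≤ ∑ i, L * (β * ‖h i‖ ^ 2) := Finset.sum_le_sum fun i _ => hterm i
        _ = L * (β * ∑ i, ‖h i‖ ^ 2) := by rw [Finset.mul_sum, Finset.mul_sum]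
        _ = L * (β * ‖h‖ ^ 2) := by rw [← PiLp.norm_sq_eq_of_L2]
    have hh2 : ‖h‖ ^ 2 ≤ R ^ 2 := by
      have h0 := norm_nonneg h
      nlinarith
    rw [abs_mul, abs_mul]
    calc |(1 : ℝ) / 2| * (|1 / s| * |∑ i, v i * iteratedFDeriv ℝ 2 (g i) (ξ i) ![h i, h i]|)
        ≤ |(1 : ℝ) / 2| * (|1 / s| * (L * (β * ‖h‖ ^ 2))) :=
          mul_le_mul_of_nonneg_left (mul_le_mul_of_nonneg_left hsum (abs_nonneg _))
            (abs_nonneg _)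
      _ ≤ |(1 : ℝ) / 2| * (|1 / s| * (L * (β * R ^ 2))) :=
          mul_le_mul_of_nonneg_left (mul_le_mul_of_nonneg_left
            (mul_le_mul_of_nonneg_left (mul_le_mul_of_nonneg_left hh2 hβ) hL)
              (abs_nonneg _)) (abs_nonneg _)
      _ = β * R ^ 2 * L / (2 * s) := by
          rw [abs_of_pos (by positivity : (0:ℝ) < 1 / s),
            abs_of_pos (by norm_num : (0:ℝ) < (1:ℝ)/2)]
          field_simp
  have hbad : ∀ i : Fin m, Measure.pi (fun _ : Fin m => gaussianReal 0 1)
      {v : Fin m → ℝ | L < |v i|} ≤ ENNReal.ofReal (2 * Real.exp (-L ^ 2 / 2)) := by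
    intro i
    have hAm : MeasurableSet {x : ℝ | L < |x|} :=
      measurableSet_lt measurable_const measurable_id.abs
    have heq : {v : Fin m → ℝ | L < |v i|} = Function.eval i ⁻¹' {x : ℝ | L < |x|} := rfl
    rw [heq, pi_eval (gaussianReal 0 1) i {x : ℝ | L < |x|} hAm]
    exact gauss_tail hL
  have hEc : Measure.pi (fun _ : Fin m => gaussianReal 0 1) Eᶜ ≤
      ENNReal.ofReal (2 * Real.exp (-(1 / 2) * L ^ 2 + L)) := by
    have hsub : Eᶜ ⊆ ⋃ i : Fin m, {v : Fin m → ℝ | L < |v i|} := by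
      intro v hv
      simp only [hE, Set.mem_compl_iff, Set.mem_setOf_eq, not_forall, not_le] at hv
      obtain ⟨i, hi⟩ := hv
      exact Set.mem_iUnion.mpr ⟨i, hi⟩
    calc Measure.pi (fun _ : Fin m => gaussianReal 0 1) Eᶜ
        ≤ ∑' i : Fin m, Measure.pi (fun _ : Fin m => gaussianReal 0 1)
            {v : Fin m → ℝ | L < |v i|} :=
          le_trans (measure_mono hsub) (measure_iUnion_le _)
      _ = ∑ i : Fin m, Measure.pi (fun _ : Fin m => gaussianReal 0 1)
            {v : Fin m → ℝ | L < |v i|} := tsum_fintype _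
      _ ≤ ∑ _i : Fin m, ENNReal.ofReal (2 * Real.exp (-L ^ 2 / 2)) :=
          Finset.sum_le_sum fun i _ => hbad i
      _ = (m : ENNReal) * ENNReal.ofReal (2 * Real.exp (-L ^ 2 / 2)) := by
          rw [Finset.sum_const, Finset.card_univ, Fintype.card_fin, nsmul_eq_mul]
      _ = ENNReal.ofReal (2 * Real.exp (-(1 / 2) * L ^ 2 + L)) := by
          rw [← ENNReal.ofReal_natCast m, ← ENNReal.ofReal_mul (by positivity)]
          congr 1
          rw [show (-(1 / 2) * L ^ 2 + L) = (-L ^ 2 / 2) + L by ring, Real.exp_add,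
            hLdef, Real.exp_log (by exact_mod_cast hm : (0:ℝ) < (m:ℝ))]
          ring
  have hprob : (1 : ENNReal) ≤ Measure.pi (fun _ : Fin m => gaussianReal 0 1) E +
      Measure.pi (fun _ : Fin m => gaussianReal 0 1) Eᶜ := by
    have huniv : (Measure.pi (fun _ : Fin m => gaussianReal 0 1)) (E ∪ Eᶜ) ≤ _ :=
      measure_union_le E Eᶜ
    rwa [Set.union_compl_self, measure_univ] at huniv
  calc ENNReal.ofReal (1 - 2 * Real.exp (-(1 / 2) * Real.log m ^ 2 + Real.log m))
      = 1 - ENNReal.ofReal (2 * Real.exp (-(1 / 2) * L ^ 2 + L)) := by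
        rw [ENNReal.ofReal_sub _ (by positivity), ENNReal.ofReal_one]
    _ ≤ 1 - Measure.pi (fun _ : Fin m => gaussianReal 0 1) Eᶜ := tsub_le_tsub_left hEc 1
    _ ≤ Measure.pi (fun _ : Fin m => gaussianReal 0 1) E := by
        rw [tsub_le_iff_right]
        exact hprob
    _ ≤ _ := measure_mono hsubset
end

section
/- Let n_1, ..., n_m ∈ ℝ^p be pairwise orthogonal unit vectors and let g_i(θ) = φ_i(n_i^T θ) with each φ_i twice differentiable and |φ_i''| ≤ β. Define f(θ) = (1/√m) Σ_{i=1}^m w_i g_i(θ) with weights satisfying |w_i| ≤ W for all i. Then for any θ, θ_0 with ‖θ - θ_0‖ ≤ R and any ξ, the quadratic term satisfies |(1/2)(θ-θ_0)^T H_f(ξ)(θ-θ_0)| ≤ β·W·R²/(2√m). -/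
open RealInnerProductSpace

/-- Second directional derivative of a rank-one function `θ ↦ φ (⟪n, θ⟫)`. -/
lemma rankOne_iteratedFDeriv_two {p : ℕ} (nn : EuclideanSpace ℝ (Fin p)) (φ : ℝ → ℝ)
    (hφ : ContDiff ℝ 2 φ) (ξ v : EuclideanSpace ℝ (Fin p)) :
    iteratedFDeriv ℝ 2 (φ ∘ (innerSL ℝ nn)) ξ ![v, v]
      = (⟪nn, v⟫ * ⟪nn, v⟫) * deriv (deriv φ) (⟪nn, ξ⟫) := by
  have h := (innerSL ℝ nn).iteratedFDeriv_comp_right hφ ξ (i := 2) le_rfl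
  rw [h, ContinuousMultilinearMap.compContinuousLinearMap_apply]
  have : (fun i : Fin 2 => (innerSL ℝ nn) (![v, v] i)) = ![⟪nn, v⟫, ⟪nn, v⟫] := by
    funext i; fin_cases i <;> simp
  rw [this, iteratedFDeriv_apply_eq_iteratedDeriv_mul_prod]
  simp [iteratedDeriv_succ, iteratedDeriv_zero, Fin.prod_univ_two, smul_eq_mul]

/-- Assembling rank-one sub-models with pairwise orthogonal unit normals and bounded
weights: the quadratic Taylor remainder is bounded by `β W R² / (2 √m)`. -/
theorem stmt6 (p m : ℕ) (β W R : ℝ) (hβ : 0 ≤ β) (hW : 0 ≤ W) (hR : 0 ≤ R)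
    (n : Fin m → EuclideanSpace ℝ (Fin p)) (hunit : ∀ i, ‖n i‖ = 1)
    (horth : ∀ i j, i ≠ j → ⟪n i, n j⟫ = 0)
    (φ : Fin m → ℝ → ℝ) (hφ : ∀ i, ContDiff ℝ 2 (φ i))
    (hβφ : ∀ i t, |deriv (deriv (φ i)) t| ≤ β)
    (w : Fin m → ℝ) (hw : ∀ i, |w i| ≤ W)
    (f : EuclideanSpace ℝ (Fin p) → ℝ)
    (hf : ∀ θ, f θ = (1 / Real.sqrt m) * ∑ i, w i * φ i (⟪n i, θ⟫))
    (θ θ₀ ξ : EuclideanSpace ℝ (Fin p)) (hθ : ‖θ - θ₀‖ ≤ R) :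
    |(1 / 2 : ℝ) * iteratedFDeriv ℝ 2 f ξ ![θ - θ₀, θ - θ₀]| ≤
      β * W * R ^ 2 / (2 * Real.sqrt m) := by
  set v := θ - θ₀ with hv
  set c : ℝ := 1 / Real.sqrt m with hc
  have hc0 : 0 ≤ c := by positivity
  -- each summand as a function
  set g : Fin m → EuclideanSpace ℝ (Fin p) → ℝ :=
    fun i θ => w i * φ i (⟪n i, θ⟫) with hg
  have hgC : ∀ i, ContDiff ℝ 2 (g i) := fun i =>
    contDiff_const.mul ((hφ i).comp (innerSL ℝ (n i)).contDiff)
  have hfun : f = c • fun x => ∑ i, g i x := by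
    funext x
    simp [hf x, hg, smul_eq_mul]
  -- compute the second derivative applied to ![v, v]
  have hkey : iteratedFDeriv ℝ 2 f ξ ![v, v]
      = c * ∑ i, w i * ((⟪n i, v⟫ * ⟪n i, v⟫) * deriv (deriv (φ i)) (⟪n i, ξ⟫)) := by
    rw [hfun]
    rw [iteratedFDeriv_const_smul_apply (ContDiff.sum fun i _ => hgC i).contDiffAt]
    have hsum : iteratedFDeriv ℝ 2 (fun x => ∑ i, g i x) ξ
        = ∑ i, iteratedFDeriv ℝ 2 (g i) ξ := by
      rw [iteratedFDeriv_sum fun i _ => hgC i]; simp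
    rw [hsum]
    simp only [ContinuousMultilinearMap.smul_apply, ContinuousMultilinearMap.sum_apply,
      smul_eq_mul]
    congr 1
    refine Finset.sum_congr rfl fun i _ => ?_
    have hgi : g i = fun θ => w i • ((φ i ∘ (innerSL ℝ (n i))) θ) := rfl
    rw [hgi, iteratedFDeriv_const_smul_apply' ((hφ i).comp (innerSL ℝ (n i)).contDiff).contDiffAt]
    simp only [ContinuousMultilinearMap.smul_apply, smul_eq_mul]
    rw [rankOne_iteratedFDeriv_two (n i) (φ i) (hφ i) ξ v]
  -- bound
  have hon : Orthonormal ℝ n := ⟨hunit, fun {i j} h => horth i j h⟩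
  have hbessel : ∑ i, ⟪n i, v⟫ ^ 2 ≤ ‖v‖ ^ 2 := by
    have := hon.sum_inner_products_le (s := Finset.univ) v
    simpa [Real.norm_eq_abs, sq_abs] using this
  have hterm : ∀ i : Fin m,
      |w i * ((⟪n i, v⟫ * ⟪n i, v⟫) * deriv (deriv (φ i)) (⟪n i, ξ⟫))|
        ≤ W * β * ⟪n i, v⟫ ^ 2 := by
    intro i
    rw [abs_mul, abs_mul]
    have h1 : |⟪n i, v⟫ * ⟪n i, v⟫| = ⟪n i, v⟫ ^ 2 := by
      rw [← sq, abs_pow, sq_abs]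
    rw [h1]
    calc |w i| * (⟪n i, v⟫ ^ 2 * |deriv (deriv (φ i)) (⟪n i, ξ⟫)|)
        ≤ W * (⟪n i, v⟫ ^ 2 * β) := by
          apply mul_le_mul (hw i) ?_ (by positivity) hW
          exact mul_le_mul_of_nonneg_left (hβφ i _) (sq_nonneg _)
      _ = W * β * ⟪n i, v⟫ ^ 2 := by ring
  have habs : |iteratedFDeriv ℝ 2 f ξ ![v, v]| ≤ c * (W * β * R ^ 2) := by
    rw [hkey, abs_mul, abs_of_nonneg hc0]
    apply mul_le_mul_of_nonneg_left ?_ hc0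
    calc |∑ i, w i * ((⟪n i, v⟫ * ⟪n i, v⟫) * deriv (deriv (φ i)) (⟪n i, ξ⟫))|
        ≤ ∑ i, |w i * ((⟪n i, v⟫ * ⟪n i, v⟫) * deriv (deriv (φ i)) (⟪n i, ξ⟫))| :=
          Finset.abs_sum_le_sum_abs _ _
      _ ≤ ∑ i, W * β * ⟪n i, v⟫ ^ 2 := Finset.sum_le_sum fun i _ => hterm i
      _ = W * β * ∑ i, ⟪n i, v⟫ ^ 2 := by rw [Finset.mul_sum]
      _ ≤ W * β * ‖v‖ ^ 2 := by
          apply mul_le_mul_of_nonneg_left hbessel (by positivity)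
      _ ≤ W * β * R ^ 2 := by
          apply mul_le_mul_of_nonneg_left ?_ (by positivity)
          exact pow_le_pow_left₀ (norm_nonneg _) hθ 2
  rw [abs_mul]
  have h12 : |(1 / 2 : ℝ)| = 1 / 2 := by norm_num
  rw [h12]
  calc (1 / 2 : ℝ) * |iteratedFDeriv ℝ 2 f ξ ![v, v]|
      ≤ (1 / 2 : ℝ) * (c * (W * β * R ^ 2)) := by linarith [habs]
    _ = β * W * R ^ 2 / (2 * Real.sqrt m) := by
        rw [hc]
        rcases eq_or_lt_of_le (Real.sqrt_nonneg (m : ℝ)) with h | h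
        · rw [← h]; simp
        · have hne : Real.sqrt m ≠ 0 := h.ne'
          field_simp
          try ring
          try simp
end
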